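/- For every integer n ≥ 0 there exists a polynomial P_n in three variables with nonnegative integer coefficients such that, in K, σ(μ^{(1)}_n) · ∏_{k=1}^{n+1} [ν+k]_q^{⌊(n+1)/k⌋} = Q^n · [ν+1]_q · P_n(q, Q, [ν]_q), and this P_n is the same as the numerator polynomial in the base-q expansion, i.e. one also has μ^{(1)}_n · ∏_{k=1}^{n+1} [ν+k]_q^{⌊(n+1)/k⌋} = (Qq)^n · [ν+1]_q · P_n(q, Q, [ν]_q). Equivalently (Theorem 3.4): J^{(1)}_{ν+1}((1−q)z;q^{−1})/J^{(1)}_ν((1−q)z;q^{−1}) = −∑_{n≥1} (N^{(1)}_{n,ν}(q)/D_{n,ν}(q)) q^{νn−1} (z/2)^{2n−1}, with the same N^{(1)}_{n,ν}(q), D_{n,ν}(q) = ∏_{k=1}^{n}[k+ν]_q^{⌊n/k⌋} as in the base-q expansion, and N^{(1)}_{n,ν}(q) has nonnegative integer coefficients as a polynomial in q, q^ν and [ν]_q. -/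

import Mathlib

/- Let `K` be the fraction field of `ℚ[q,Q]`, where `Q` plays the role of `q^ν`.
`θ1ν` and `θ1ν1` are the series `θ^{(1)}_ν` and `θ^{(1)}_{ν+1}` of Jackson's
`q`-Bessel function `J^{(1)}_ν`, and `μ1 n` are the coefficients of
`θ^{(1)}_{ν+1}/θ^{(1)}_ν`. -/

noncomputable section

abbrev K : Type := FractionRing (MvPolynomial (Fin 2) ℚ)

def qv : K := algebraMap (MvPolynomial (Fin 2) ℚ) K (MvPolynomial.X 0)

def Qv : K := algebraMap (MvPolynomial (Fin 2) ℚ) K (MvPolynomial.X 1)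

/-- The q-Pochhammer symbol `(a;q)_n`. -/
def qPoch (a : K) (n : ℕ) : K := ∏ j ∈ Finset.range n, (1 - a * qv ^ j)

/-- `[ν+k]_q = (1 - Q q^k)/(1-q)`. -/
def brk (k : ℕ) : K := (1 - Qv * qv ^ k) / (1 - qv)

/-- `[ν]_q = (1 - Q)/(1-q)`. -/
def brNu : K := (1 - Qv) / (1 - qv)

/-- `θ^{(1)}_ν(x)`. -/
def θ1ν : PowerSeries K :=
  PowerSeries.mk fun n =>
    (-1) ^ n * (1 - qv) ^ (2 * n) / (qPoch qv n * qPoch (Qv * qv) n)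

/-- `θ^{(1)}_{ν+1}(x)`. -/
def θ1ν1 : PowerSeries K :=
  PowerSeries.mk fun n =>
    (-1) ^ n * (1 - qv) ^ (2 * n) / (qPoch qv n * qPoch (Qv * qv ^ 2) n)

/-- The coefficients `μ^{(1)}_n` of `θ^{(1)}_{ν+1}(x)/θ^{(1)}_ν(x)`. -/
def μ1 (n : ℕ) : K := PowerSeries.coeff n (θ1ν1 * θ1ν⁻¹)

lemma inj : Function.Injective (algebraMap (MvPolynomial (Fin 2) ℚ) K) :=
  IsFractionRing.injective _ _

lemma poly_ne {p : MvPolynomial (Fin 2) ℚ}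
    (h : MvPolynomial.eval ![2, 3] p ≠ 0) :
    algebraMap (MvPolynomial (Fin 2) ℚ) K p ≠ 0 := by
  intro h0
  apply h
  have : p = 0 := by
    apply inj
    simpa using h0
  simp [this]

lemma hq0 : qv ≠ 0 := by
  rw [qv]
  apply poly_ne
  norm_num

lemma hQ0 : Qv ≠ 0 := by
  rw [Qv]
  apply poly_ne
  norm_num

lemma hQq (m : ℕ) : (1 : K) - Qv * qv ^ m ≠ 0 := by
  have : (1 : K) - Qv * qv ^ m
      = algebraMap (MvPolynomial (Fin 2) ℚ) K (1 - MvPolynomial.X 1 * MvPolynomial.X 0 ^ m) := by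
    simp [qv, Qv]
  rw [this]
  apply poly_ne
  have h2 : (1:ℚ) ≤ 2 ^ m := one_le_pow₀ (by norm_num)
  simp only [MvPolynomial.eval_sub, map_one, MvPolynomial.eval_mul,
    MvPolynomial.eval_X, MvPolynomial.eval_pow]
  norm_num
  nlinarith
  
lemma hqpow (m : ℕ) : (1 : K) - qv ^ (m + 1) ≠ 0 := by
  have : (1 : K) - qv ^ (m+1)
      = algebraMap (MvPolynomial (Fin 2) ℚ) K (1 - MvPolynomial.X 0 ^ (m+1)) := by
    simp [qv]
  rw [this]
  apply poly_ne
  have h2 : (2:ℚ) ≤ 2 ^ (m+1) := by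
    calc (2:ℚ) = 2^1 := by norm_num
    _ ≤ 2^(m+1) := by apply pow_le_pow_right₀ (by norm_num) (by omega)
  simp only [MvPolynomial.eval_sub, map_one, MvPolynomial.eval_pow,
    MvPolynomial.eval_X]
  norm_num
  nlinarith

lemma h1q : (1 : K) - qv ≠ 0 := by
  have := hqpow 0
  simpa using this

lemma hq1 : qv ≠ 1 := fun h => h1q (by rw [h]; ring)


/-! qPoch lemmas -/

lemma qPoch_zero (a : K) : qPoch a 0 = 1 := by simp [qPoch]

lemma qPoch_succ (a : K) (n : ℕ) : qPoch a (n + 1) = qPoch a n * (1 - a * qv ^ n) :=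
  Finset.prod_range_succ _ _

lemma qPoch_q_succ (n : ℕ) : qPoch qv (n + 1) = qPoch qv n * (1 - qv ^ (n + 1)) := by
  rw [qPoch_succ]; ring_nf

lemma qPoch_Qq_succ (n : ℕ) :
    qPoch (Qv * qv) (n + 1) = qPoch (Qv * qv ^ 2) n * (1 - Qv * qv) := by
  rw [qPoch, Finset.prod_range_succ']
  simp only [pow_zero, mul_one]
  congr 1
  apply Finset.prod_congr rfl
  intro j _
  ring

lemma qPoch_Qq_succ' (n : ℕ) :
    qPoch (Qv * qv) (n + 1) = qPoch (Qv * qv) n * (1 - Qv * qv ^ (n + 1)) := by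
  rw [qPoch_succ]; ring_nf

lemma qPoch_Qq2_succ (n : ℕ) :
    qPoch (Qv * qv ^ 2) (n + 1) = qPoch (Qv * qv ^ 2) n * (1 - Qv * qv ^ (n + 2)) := by
  rw [qPoch_succ]; ring_nf

lemma qPoch_q_ne (n : ℕ) : qPoch qv n ≠ 0 := by
  rw [qPoch]
  apply Finset.prod_ne_zero_iff.2
  intro j _
  have := hqpow j
  intro h; apply this
  rw [← h]; ring

lemma qPoch_Qq_ne (n : ℕ) : qPoch (Qv * qv) n ≠ 0 := by
  rw [qPoch]
  apply Finset.prod_ne_zero_iff.2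
  intro j _
  have := hQq (j + 1)
  intro h; apply this
  rw [← h]; ring

lemma qPoch_Qq2_ne (n : ℕ) : qPoch (Qv * qv ^ 2) n ≠ 0 := by
  rw [qPoch]
  apply Finset.prod_ne_zero_iff.2
  intro j _
  have := hQq (j + 2)
  intro h; apply this
  rw [← h]; ring

lemma brk_ne (k : ℕ) : brk k ≠ 0 := div_ne_zero (hQq k) h1q

/-! the two series relations -/

open PowerSeries

lemma coeff_u (n : ℕ) : coeff n θ1ν
    = (-1) ^ n * (1 - qv) ^ (2 * n) / (qPoch qv n * qPoch (Qv * qv) n) := by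
  simp [θ1ν]

lemma coeff_v (n : ℕ) : coeff n θ1ν1
    = (-1) ^ n * (1 - qv) ^ (2 * n) / (qPoch qv n * qPoch (Qv * qv ^ 2) n) := by
  simp [θ1ν1]

lemma L2 : θ1ν - rescale qv θ1ν
    = PowerSeries.C (-((1 - qv) ^ 2 / (1 - Qv * qv))) * (PowerSeries.X * θ1ν1) := by
  ext n
  rcases n with _ | n
  · rw [map_sub, coeff_rescale, coeff_C_mul, coeff_zero_X_mul]
    simp
  · rw [map_sub, coeff_rescale, coeff_u, coeff_C_mul, coeff_succ_X_mul, coeff_v,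
      qPoch_q_succ, qPoch_Qq_succ]
    have h1 := qPoch_q_ne n
    have h2 := qPoch_Qq2_ne n
    have h3 := hQq 1
    have h4 := hqpow n
    have h3' : (1:K) - Qv * qv ≠ 0 := by intro h; apply h3; rw [← h]; ring
    field_simp
    ring

lemma R1 : θ1ν1 - PowerSeries.C (Qv * qv) * rescale qv θ1ν1
    = PowerSeries.C (1 - Qv * qv) * θ1ν := by
  ext n
  rw [map_sub, coeff_C_mul, coeff_rescale, coeff_C_mul, coeff_v, coeff_u]
  have key : qPoch (Qv * qv ^ 2) n * (1 - Qv * qv) = qPoch (Qv * qv) n * (1 - Qv * qv * qv ^ n) := by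
    rw [← qPoch_Qq_succ, qPoch_Qq_succ']; ring
  have h1 := qPoch_q_ne n
  have h2 := qPoch_Qq2_ne n
  have h2' := qPoch_Qq_ne n
  have ea : (qPoch qv n * qPoch (Qv * qv ^ 2) n)⁻¹ * (qPoch qv n * qPoch (Qv * qv ^ 2) n) = 1 :=
    inv_mul_cancel₀ (mul_ne_zero h1 h2)
  have eb : (qPoch qv n * qPoch (Qv * qv) n)⁻¹ * (qPoch qv n * qPoch (Qv * qv) n) = 1 :=
    inv_mul_cancel₀ (mul_ne_zero h1 h2')
  simp only [div_eq_mul_inv]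
  linear_combination (-((-1) ^ n * (1 - qv) ^ (2 * n) * (qPoch qv n * qPoch (Qv * qv ^ 2) n)⁻¹
      * (1 - Qv * qv * qv ^ n))) * eb
    + ((1 - Qv * qv) * ((-1) ^ n * (1 - qv) ^ (2 * n)) * (qPoch qv n * qPoch (Qv * qv) n)⁻¹) * ea
    - ((-1) ^ n * (1 - qv) ^ (2 * n) * (qPoch qv n * qPoch (Qv * qv ^ 2) n)⁻¹
      * (qPoch qv n * qPoch (Qv * qv) n)⁻¹ * qPoch qv n) * key


open PowerSeries

lemma cc_u : constantCoeff θ1ν = 1 := by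
  rw [← PowerSeries.coeff_zero_eq_constantCoeff_apply, coeff_u]
  simp [qPoch_zero]

lemma cc_v : constantCoeff θ1ν1 = 1 := by
  rw [← PowerSeries.coeff_zero_eq_constantCoeff_apply, coeff_v]
  simp [qPoch_zero]

lemma u_ne : θ1ν ≠ 0 := fun h => by
  have := cc_u
  rw [h] at this
  simp at this

lemma u_inv : θ1ν * θ1ν⁻¹ = 1 :=
  PowerSeries.mul_inv_cancel _ (by rw [cc_u]; exact one_ne_zero)

lemma mu_zero : μ1 0 = 1 := by
  rw [μ1, PowerSeries.coeff_zero_eq_constantCoeff_apply, map_mul, cc_v,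
    PowerSeries.constantCoeff_inv, cc_u]
  simp

/-- the functional equation for `F = θ1ν1 * θ1ν⁻¹`. -/
lemma FE : (θ1ν1 * θ1ν⁻¹) - PowerSeries.C (Qv * qv) * rescale qv (θ1ν1 * θ1ν⁻¹)
      - PowerSeries.C (Qv * qv) * PowerSeries.C ((1 - qv) ^ 2 / (1 - Qv * qv))
        * (PowerSeries.X * ((θ1ν1 * θ1ν⁻¹) * rescale qv (θ1ν1 * θ1ν⁻¹)))
    = PowerSeries.C (1 - Qv * qv) := by
  set F := θ1ν1 * θ1ν⁻¹ with hF
  set G := rescale qv F with hG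
  set lam : K := (1 - qv) ^ 2 / (1 - Qv * qv) with hlam
  apply mul_right_cancel₀ u_ne
  have h1 : F * θ1ν = θ1ν1 := by
    rw [hF, mul_assoc, mul_comm θ1ν⁻¹ θ1ν, u_inv, mul_one]
  have e2 : rescale qv θ1ν = θ1ν + PowerSeries.C lam * (PowerSeries.X * θ1ν1) := by
    have := L2
    rw [map_neg] at this
    linear_combination -this
  have e3 : G * rescale qv θ1ν = rescale qv θ1ν1 := by
    rw [hG, ← map_mul, h1]
  have h2 : G * θ1ν = rescale qv θ1ν1 - PowerSeries.C lam * (PowerSeries.X * θ1ν1 * G) := by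
    rw [← e3, e2]
    ring
  have h3 := R1
  linear_combination h1 + h3 - PowerSeries.C (Qv * qv) * h2
    - PowerSeries.C (Qv * qv) * PowerSeries.C lam * PowerSeries.X * G * h1

def S (n : ℕ) : K := ∑ i ∈ Finset.range (n + 1), μ1 i * (qv ^ (n - i) * μ1 (n - i))

lemma mu_def (n : ℕ) : coeff n (θ1ν1 * θ1ν⁻¹) = μ1 n := rfl

lemma FE' : (θ1ν1 * θ1ν⁻¹)
    = PowerSeries.C (1 - Qv * qv) + PowerSeries.C (Qv * qv) * rescale qv (θ1ν1 * θ1ν⁻¹)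
      + PowerSeries.C (Qv * qv * ((1 - qv) ^ 2 / (1 - Qv * qv)))
        * (PowerSeries.X * ((θ1ν1 * θ1ν⁻¹) * rescale qv (θ1ν1 * θ1ν⁻¹))) := by
  have h := FE
  rw [show PowerSeries.C (Qv * qv * ((1 - qv) ^ 2 / (1 - Qv * qv)))
    = PowerSeries.C (Qv * qv) * PowerSeries.C ((1 - qv) ^ 2 / (1 - Qv * qv)) from by
      rw [← map_mul]]
  linear_combination h

lemma mu_rec (n : ℕ) : brk 1 * brk (n + 2) * μ1 (n + 1) = Qv * qv * S n := by
  have h := congrArg (fun φ => coeff (n+1) φ) FE'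
  rw [map_add, map_add, coeff_C_mul, coeff_C_mul, coeff_succ_X_mul, coeff_C] at h
  have hprod : coeff n ((θ1ν1 * θ1ν⁻¹) * rescale qv (θ1ν1 * θ1ν⁻¹)) = S n := by
    rw [coeff_mul]
    simp only [coeff_rescale]
    rw [Finset.Nat.sum_antidiagonal_eq_sum_range_succ_mk]
    rfl
  have hres : coeff (n+1) (rescale qv (θ1ν1 * θ1ν⁻¹)) = qv ^ (n+1) * μ1 (n+1) := by
    rw [coeff_rescale]; rfl
  rw [hprod, hres, mu_def] at h
  simp only [Nat.succ_ne_zero, if_false] at h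
  have hQq1 : (1 : K) - Qv * qv ≠ 0 := by have := hQq 1; rwa [pow_one] at this
  have hlam : (1 - qv) ^ 2 / (1 - Qv * qv) * (1 - Qv * qv) = (1 - qv) ^ 2 :=
    div_mul_cancel₀ _ hQq1
  rw [brk, brk, div_mul_div_comm, div_mul_eq_mul_div, div_eq_iff (mul_ne_zero h1q h1q)]
  linear_combination (1 - Qv * qv) * h + Qv * qv * (S n) * hlam


/-! ### the polynomial side -/

def brkP (k : ℕ) : MvPolynomial (Fin 3) ℕ :=
  MvPolynomial.X 2 + MvPolynomial.X 1 * ∑ t ∈ Finset.range k, MvPolynomial.X 0 ^ t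

lemma brk_expand (k : ℕ) : brk k = brNu + Qv * ∑ t ∈ Finset.range k, qv ^ t := by
  have hg : (1 - qv) * ∑ t ∈ Finset.range k, qv ^ t = 1 - qv ^ k := by
    linear_combination (-1 : K) * geom_sum_mul qv k
  have hbrnu : brNu * (1 - qv) = 1 - Qv := div_mul_cancel₀ _ h1q
  rw [brk, div_eq_iff h1q]
  linear_combination (-1 : K) * hbrnu - Qv * hg

lemma Aev_brkP (k : ℕ) : MvPolynomial.aeval ![qv, Qv, brNu] (brkP k) = brk k := by
  simp [brkP, brk_expand k]

lemma floor_le {m i k : ℕ} (hi : i ≤ m) (hk1 : 1 ≤ k) (hk2 : k ≤ m + 2) :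
    (i + 1) / k + (m - i + 1) / k + (if k = m + 2 then 1 else 0) ≤ (m + 2) / k := by
  rcases eq_or_ne k (m + 2) with rfl | hne
  · rw [Nat.div_eq_of_lt (by omega), Nat.div_eq_of_lt (by omega), Nat.div_self (by omega)]
    simp
  · rw [if_neg hne]
    calc (i + 1) / k + (m - i + 1) / k ≤ ((i + 1) + (m - i + 1)) / k :=
          Nat.add_div_le_add_div _ _ _
      _ = (m + 2) / k := by congr 1; omega

/-- the product `D r` over a possibly larger index range. -/
lemma D_pad (r R : ℕ) (h : r ≤ R) :
    ∏ k ∈ Finset.Icc 1 r, brk k ^ (r / k) = ∏ k ∈ Finset.Icc 1 R, brk k ^ (r / k) := by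
  apply Finset.prod_subset
  · apply Finset.Icc_subset_Icc_right h
  · intro k hk hk'
    have : r < k := by
      simp only [Finset.mem_Icc] at hk hk'
      omega
    rw [Nat.div_eq_of_lt this, pow_zero]

lemma KEY {m i : ℕ} (hi : i ≤ m) :
    ∏ k ∈ Finset.Icc 1 (m + 2), brk k ^ ((m + 2) / k)
      = brk (m + 2) * (∏ k ∈ Finset.Icc 1 (i + 1), brk k ^ ((i + 1) / k))
        * (∏ k ∈ Finset.Icc 1 (m - i + 1), brk k ^ ((m - i + 1) / k))
        * MvPolynomial.aeval ![qv, Qv, brNu]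
            (∏ k ∈ Finset.Icc 1 (m + 2),
              brkP k ^ ((m + 2) / k - ((i + 1) / k + (m - i + 1) / k
                + if k = m + 2 then 1 else 0))) := by
  rw [D_pad (i+1) (m+2) (by omega), D_pad (m-i+1) (m+2) (by omega), map_prod]
  have hb : brk (m + 2) = ∏ k ∈ Finset.Icc 1 (m + 2), brk k ^ (if k = m + 2 then 1 else 0) := by
    simp only [pow_ite, pow_one, pow_zero]
    rw [Finset.prod_ite_eq' (Finset.Icc 1 (m+2)) (m+2) (fun k => brk k)]
    simp [Finset.mem_Icc]
  rw [hb]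
  simp only [map_pow, Aev_brkP]
  rw [← Finset.prod_mul_distrib, ← Finset.prod_mul_distrib, ← Finset.prod_mul_distrib]
  apply Finset.prod_congr rfl
  intro k hk
  rw [← pow_add, ← pow_add, ← pow_add]
  congr 1
  simp only [Finset.mem_Icc] at hk
  have := floor_le hi hk.1 hk.2
  omega


section MAIN
open Finset MvPolynomial

lemma base_q : ∀ n : ℕ, ∃ P : MvPolynomial (Fin 3) ℕ,
    μ1 n * ∏ k ∈ Finset.Icc 1 (n + 1), brk k ^ ((n + 1) / k)
      = (Qv * qv) ^ n * brk 1 * MvPolynomial.aeval ![qv, Qv, brNu] P := by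
  intro n
  induction n using Nat.strong_induction_on with
  | _ n IH =>
    match n with
    | 0 =>
      refine ⟨1, ?_⟩
      rw [mu_zero]
      simp [Finset.Icc_self]
    | (m + 1) =>
      set Pf : ℕ → MvPolynomial (Fin 3) ℕ :=
        fun i => if h : i < m + 1 then (IH i (by omega)).choose else 1 with hPfdef
      have hPf : ∀ i, i < m + 1 →
          μ1 i * ∏ k ∈ Finset.Icc 1 (i + 1), brk k ^ ((i + 1) / k)
            = (Qv * qv) ^ i * brk 1 * MvPolynomial.aeval ![qv, Qv, brNu] (Pf i) := by
        intro i h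
        rw [hPfdef]
        simp only [dif_pos h]
        exact (IH i (by omega)).choose_spec
      set E : ℕ → MvPolynomial (Fin 3) ℕ := fun i =>
        ∏ k ∈ Finset.Icc 1 (m + 2),
          brkP k ^ ((m + 2) / k - ((i + 1) / k + (m - i + 1) / k
            + if k = m + 2 then 1 else 0)) with hEdef
      refine ⟨∑ i ∈ Finset.range (m + 1),
        MvPolynomial.X 0 ^ (m - i) * (Pf i * Pf (m - i)) * E i, ?_⟩
      show μ1 (m + 1) * ∏ k ∈ Finset.Icc 1 (m + 2), brk k ^ ((m + 2) / k)
        = (Qv * qv) ^ (m + 1) * brk 1 * MvPolynomial.aeval ![qv, Qv, brNu]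
            (∑ i ∈ Finset.range (m + 1),
              MvPolynomial.X 0 ^ (m - i) * (Pf i * Pf (m - i)) * E i)
      have hA : MvPolynomial.aeval ![qv, Qv, brNu]
          (∑ i ∈ Finset.range (m + 1),
            MvPolynomial.X 0 ^ (m - i) * (Pf i * Pf (m - i)) * E i)
          = ∑ i ∈ Finset.range (m + 1), qv ^ (m - i)
              * (MvPolynomial.aeval ![qv, Qv, brNu] (Pf i)
                * MvPolynomial.aeval ![qv, Qv, brNu] (Pf (m - i))
                * MvPolynomial.aeval ![qv, Qv, brNu] (E i)) := by
        rw [map_sum]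
        apply Finset.sum_congr rfl
        intro i _
        rw [map_mul, map_mul, map_pow, map_mul, MvPolynomial.aeval_X]
        simp only [Matrix.cons_val_zero]
        ring
      apply mul_left_cancel₀ (mul_ne_zero (brk_ne 1) (brk_ne (m + 2)))
      have hstep : ∀ i ∈ Finset.range (m + 1),
          Qv * qv * (μ1 i * (qv ^ (m - i) * μ1 (m - i)))
              * ∏ k ∈ Finset.Icc 1 (m + 2), brk k ^ ((m + 2) / k)
            = (Qv * qv) ^ (m + 1) * (brk 1 * brk 1 * brk (m + 2))
              * (qv ^ (m - i) * (MvPolynomial.aeval ![qv, Qv, brNu] (Pf i)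
                * MvPolynomial.aeval ![qv, Qv, brNu] (Pf (m - i))
                * MvPolynomial.aeval ![qv, Qv, brNu] (E i))) := by
        intro i hi
        rw [Finset.mem_range] at hi
        have hi' : i ≤ m := by omega
        rw [KEY hi']
        have h2 := hPf i (by omega)
        have h3 := hPf (m - i) (by omega)
        have hpow : ((Qv * qv) : K) ^ i * (Qv * qv) ^ (m - i) * (Qv * qv)
            = (Qv * qv) ^ (m + 1) := by
          rw [← pow_add, ← pow_succ]
          congr 1
          omega
        set Di := ∏ k ∈ Finset.Icc 1 (i + 1), brk k ^ ((i + 1) / k)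
        set Dj := ∏ k ∈ Finset.Icc 1 (m - i + 1), brk k ^ ((m - i + 1) / k)
        set AE := MvPolynomial.aeval ![qv, Qv, brNu] (E i)
        set Ai := MvPolynomial.aeval ![qv, Qv, brNu] (Pf i)
        set Aj := MvPolynomial.aeval ![qv, Qv, brNu] (Pf (m - i))
        calc Qv * qv * (μ1 i * (qv ^ (m - i) * μ1 (m - i)))
              * (brk (m + 2) * Di * Dj * AE)
            = (μ1 i * Di) * (μ1 (m - i) * Dj)
                * (Qv * qv * qv ^ (m - i) * brk (m + 2) * AE) := by ring
          _ = ((Qv * qv) ^ i * brk 1 * Ai) * ((Qv * qv) ^ (m - i) * brk 1 * Aj)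
                * (Qv * qv * qv ^ (m - i) * brk (m + 2) * AE) := by rw [h2, h3]
          _ = (Qv * qv) ^ (m + 1) * (brk 1 * brk 1 * brk (m + 2))
                * (qv ^ (m - i) * (Ai * Aj * AE)) := by
              linear_combination (brk 1 * brk 1 * Ai * Aj * brk (m + 2)
                * qv ^ (m - i) * AE) * hpow
      calc brk 1 * brk (m + 2)
            * (μ1 (m + 1) * ∏ k ∈ Finset.Icc 1 (m + 2), brk k ^ ((m + 2) / k))
          = (Qv * qv * S m) * ∏ k ∈ Finset.Icc 1 (m + 2), brk k ^ ((m + 2) / k) := by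
            rw [← mu_rec]; ring
        _ = ∑ i ∈ Finset.range (m + 1),
              Qv * qv * (μ1 i * (qv ^ (m - i) * μ1 (m - i)))
                * ∏ k ∈ Finset.Icc 1 (m + 2), brk k ^ ((m + 2) / k) := by
            rw [S, Finset.mul_sum, Finset.sum_mul]
        _ = ∑ i ∈ Finset.range (m + 1),
              (Qv * qv) ^ (m + 1) * (brk 1 * brk 1 * brk (m + 2))
                * (qv ^ (m - i) * (MvPolynomial.aeval ![qv, Qv, brNu] (Pf i)
                  * MvPolynomial.aeval ![qv, Qv, brNu] (Pf (m - i))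
                  * MvPolynomial.aeval ![qv, Qv, brNu] (E i))) :=
            Finset.sum_congr rfl hstep
        _ = (Qv * qv) ^ (m + 1) * (brk 1 * brk 1 * brk (m + 2))
              * ∑ i ∈ Finset.range (m + 1), qv ^ (m - i)
                * (MvPolynomial.aeval ![qv, Qv, brNu] (Pf i)
                  * MvPolynomial.aeval ![qv, Qv, brNu] (Pf (m - i))
                  * MvPolynomial.aeval ![qv, Qv, brNu] (E i)) := by
            rw [Finset.mul_sum]
        _ = brk 1 * brk (m + 2) * ((Qv * qv) ^ (m + 1) * brk 1
              * MvPolynomial.aeval ![qv, Qv, brNu]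
                (∑ i ∈ Finset.range (m + 1),
                  MvPolynomial.X 0 ^ (m - i) * (Pf i * Pf (m - i)) * E i)) := by
            rw [hA]; ring

end MAIN

variable (σ : K ≃+* K)

lemma sigma_brk (hq : σ qv = qv⁻¹) (hQ : σ Qv = Qv⁻¹) (m : ℕ) :
    Qv * qv ^ m * σ (brk (m + 1)) = brk (m + 1) := by
  have h1qi : (1 : K) - qv⁻¹ ≠ 0 := by
    intro h
    apply hq1
    have : qv⁻¹ = 1 := (sub_eq_zero.mp h).symm
    rwa [inv_eq_one] at this
  rw [brk, map_div₀, map_sub, map_sub, map_one, map_mul, map_pow, hq, hQ, inv_pow]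
  have e2 : (qv : K) ^ (m + 1) * (qv ^ (m + 1))⁻¹ = 1 := mul_inv_cancel₀ (pow_ne_zero _ hq0)
  have eQ : Qv * Qv⁻¹ = 1 := mul_inv_cancel₀ hQ0
  have eq' : qv * qv⁻¹ = 1 := mul_inv_cancel₀ hq0
  rw [← mul_div_assoc, div_eq_div_iff h1qi h1q]
  linear_combination (qv ^ (m + 1) * (qv ^ (m + 1))⁻¹ - qv ^ m * (qv ^ (m + 1))⁻¹) * eQ
    + (1 - qv⁻¹) * e2 + (qv ^ m * (qv ^ (m + 1))⁻¹ - Qv * qv ^ m) * eq'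

lemma sigma_mu (hq : σ qv = qv⁻¹) (hQ : σ Qv = Qv⁻¹) :
    ∀ n : ℕ, qv ^ n * σ (μ1 n) = μ1 n := by
  intro n
  induction n using Nat.strong_induction_on with
  | _ n IH =>
    match n with
    | 0 => simp [mu_zero]
    | (m + 1) =>
      have hS : qv ^ (2 * m) * σ (S m) = S m := by
        rw [S, map_sum, Finset.mul_sum]
        conv_rhs => rw [← Finset.sum_range_reflect (fun j => μ1 j * (qv ^ (m - j) * μ1 (m - j))) (m + 1)]
        apply Finset.sum_congr rfl
        intro j hj
        rw [Finset.mem_range] at hj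
        have hj' : j ≤ m := by omega
        have e1 : m + 1 - 1 - j = m - j := by omega
        rw [e1]
        have e2 : m - (m - j) = j := by omega
        rw [e2]
        rw [map_mul, map_mul, map_pow, hq]
        have IHj := IH j (by omega)
        have IHmj := IH (m - j) (by omega)
        have hcan : qv ^ (m - j) * (qv⁻¹) ^ (m - j) = 1 := by
          rw [← mul_pow, mul_inv_cancel₀ hq0, one_pow]
        have hsplit : (qv : K) ^ (2 * m) = qv ^ j * qv ^ (m - j) * qv ^ (m - j) * qv ^ j := by
          rw [← pow_add, ← pow_add, ← pow_add]
          congr 1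
          omega
        rw [hsplit]
        linear_combination (qv ^ (m - j) * qv ^ (m - j) * (qv⁻¹) ^ (m - j) * σ (μ1 (m - j))
            * qv ^ j) * IHj
          + (qv ^ j * μ1 j * qv ^ (m - j) * (qv⁻¹) ^ (m - j)) * IHmj
          + (qv ^ j * μ1 j * μ1 (m - j)) * hcan
      have hb1 : Qv * qv ^ 0 * σ (brk 1) = brk 1 := sigma_brk σ hq hQ 0
      have hb2 : Qv * qv ^ (m + 1) * σ (brk (m + 2)) = brk (m + 2) := sigma_brk σ hq hQ (m + 1)
      have hσrec := congrArg σ (mu_rec m)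
      simp only [map_mul] at hσrec
      rw [hq, hQ] at hσrec
      have hqc : qv * qv⁻¹ = 1 := mul_inv_cancel₀ hq0
      have hQc : Qv * Qv⁻¹ = 1 := mul_inv_cancel₀ hQ0
      have key : brk 1 * brk (m + 2) * (qv ^ (m + 1) * σ (μ1 (m + 1))) = Qv * qv * S m := by
        rw [← hb1, ← hb2, ← hS]
        linear_combination (Qv ^ 2 * qv ^ (2 * m + 2)) * hσrec
          + (Qv * qv ^ (2 * m + 1) * σ (S m) * (Qv * Qv⁻¹)) * hqc
          + (Qv * qv ^ (2 * m + 1) * σ (S m)) * hQc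
      apply mul_left_cancel₀ (mul_ne_zero (brk_ne 1) (brk_ne (m + 2)))
      rw [key, mu_rec m]


/-- Theorem 3.4, the `q`-Kishore theorem for Jackson's `q`-Bessel functions with base
`q⁻¹`: the same numerator polynomial `P_n` (with nonnegative integer coefficients)
serves for both `σ(μ^{(1)}_n)` (base `q⁻¹`) and `μ^{(1)}_n` (base `q`), where `σ` is the
field automorphism of `K` with `σ(q) = q⁻¹`, `σ(Q) = Q⁻¹`. -/
theorem q_kishore_jackson_base_q_inv (σ : K ≃+* K) (hq : σ qv = qv⁻¹) (hQ : σ Qv = Qv⁻¹) :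
    ∀ n : ℕ, ∃ P : MvPolynomial (Fin 3) ℕ,
      σ (μ1 n) * ∏ k ∈ Finset.Icc 1 (n + 1), brk k ^ ((n + 1) / k)
          = Qv ^ n * brk 1 * MvPolynomial.aeval ![qv, Qv, brNu] P ∧
      μ1 n * ∏ k ∈ Finset.Icc 1 (n + 1), brk k ^ ((n + 1) / k)
          = (Qv * qv) ^ n * brk 1 * MvPolynomial.aeval ![qv, Qv, brNu] P := by
  intro n
  obtain ⟨P, hP⟩ := base_q n
  refine ⟨P, ?_, hP⟩
  have hs := sigma_mu σ hq hQ n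
  apply mul_left_cancel₀ (pow_ne_zero n hq0)
  calc qv ^ n * (σ (μ1 n) * ∏ k ∈ Finset.Icc 1 (n + 1), brk k ^ ((n + 1) / k))
      = (qv ^ n * σ (μ1 n)) * ∏ k ∈ Finset.Icc 1 (n + 1), brk k ^ ((n + 1) / k) := by ring
    _ = μ1 n * ∏ k ∈ Finset.Icc 1 (n + 1), brk k ^ ((n + 1) / k) := by rw [hs]
    _ = (Qv * qv) ^ n * brk 1 * MvPolynomial.aeval ![qv, Qv, brNu] P := hP
    _ = qv ^ n * (Qv ^ n * brk 1 * MvPolynomial.aeval ![qv, Qv, brNu] P) := by ring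

end
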